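/- Conversely, if the zero set of a non-isotropic cycle v contains two distinct points m, m' ∈ E that are conjugate with respect to a non-isotropic cycle u, then ⟨u, v⟩ = 0. -/

import Mathlib

/-- Conversely, if the zero set of a non-isotropic cycle `v` contains two distinct
points `m, m'` that are conjugate with respect to a non-isotropic cycle `u`, then
`⟨u, v⟩ = 0`. -/
theorem stmt_16 {k : Type*} [Field k] (hchar : (2 : k) ≠ 0)
    {E : Type*} [AddCommGroup E] [Module k E]
    (B : LinearMap.BilinForm k E) (hB : B.IsSymm)
    (haniso : ∀ x : E, B x x = 0 → x = 0)
    (cyc : (k × E × k) → (k × E × k) → k)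
    (hcyc : ∀ p q : k × E × k,
      cyc p q = B p.2.1 q.2.1 - 2 * p.1 * q.2.2 - 2 * q.1 * p.2.2)
    (u v : k × E × k) (hu : cyc u u ≠ 0) (hv : cyc v v ≠ 0)
    (m m' : E) (hmm : m ≠ m')
    (hconj : ∃ lam : k, lam ≠ 0 ∧
      ((1 : k), -((2 : k) • m), B m m) -
          (2 * (cyc ((1 : k), -((2 : k) • m), B m m) u / cyc u u)) • u
        = lam • ((1 : k), -((2 : k) • m'), B m' m'))
    (hm : v.1 * B m m + B v.2.1 m + v.2.2 = 0)
    (hm' : v.1 * B m' m' + B v.2.1 m' + v.2.2 = 0) :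
    cyc u v = 0 := by
  obtain ⟨lam, hlam, heq⟩ := hconj
  set t : k := 2 * (cyc ((1 : k), -((2 : k) • m), B m m) u / cyc u u) with ht
  have h1 : (1 : k) - t * u.1 = lam * 1 := congrArg Prod.fst heq
  have h2 : -((2 : k) • m) - t • u.2.1 = lam • (-((2 : k) • m')) :=
    congrArg (fun p => p.2.1) heq
  have h3 : B m m - t * u.2.2 = lam * B m' m' := congrArg (fun p => p.2.2) heq
  by_cases htz : t = 0
  · exfalso
    simp only [htz, zero_smul, zero_mul, sub_zero, mul_one] at h1 h2
    have hlam1 : lam = 1 := h1.symm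
    rw [hlam1, one_smul, neg_inj] at h2
    exact hmm (smul_right_injective E hchar h2)
  · -- apply B (·) v.2.1 to h2
    have key : B (-((2 : k) • m) - t • u.2.1) v.2.1
        = B (lam • (-((2 : k) • m'))) v.2.1 := by rw [h2]
    simp only [map_sub, map_smul, map_neg, LinearMap.sub_apply, LinearMap.smul_apply,
      LinearMap.neg_apply, smul_eq_mul] at key
    have hs : B m v.2.1 = B v.2.1 m := hB.eq m v.2.1
    have hs' : B m' v.2.1 = B v.2.1 m' := hB.eq m' v.2.1
    have main : t * cyc u v = 0 := by
      rw [hcyc u v]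
      linear_combination -key + 2 * v.2.2 * h1 + 2 * v.1 * h3
        - 2 * hm + 2 * lam * hm' - 2 * hs + 2 * lam * hs'
    exact (mul_eq_zero.mp main).resolve_left htz
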